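/- Let D ⊆ ℂ be open and g : D → ℂ holomorphic with g′ nonvanishing on D. Define ν : D → ℝ by ν = 4|g′|²/(|g|² + 1)². Then ν > 0 and ν satisfies the natural equation of minimal surfaces in ℝ³: Δ(ln ν) + 2ν = 0 on D, where Δ is the Laplace operator in the two real coordinates of D ⊆ ℂ ≅ ℝ². -/

import Mathlib

open Complex

/-- The Laplace operator `ΔF = F_uu + F_vv` for a function on `ℂ ≅ ℝ²`,
where the two real directions are `1` and `i`. -/
noncomputable def lap (F : ℂ → ℝ) (t : ℂ) : ℝ :=
  fderiv ℝ (fun z => fderiv ℝ F z 1) t 1 +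
  fderiv ℝ (fun z => fderiv ℝ F z Complex.I) t Complex.I

/-- STATEMENT 14: for `g` holomorphic on the open set `D ⊆ ℂ` with `g′` nonvanishing,
`ν = 4|g′|²/(|g|²+1)²` is positive and satisfies the natural equation of minimal
surfaces in `ℝ³`: `Δ(ln ν) + 2ν = 0` on `D`. -/
noncomputable def mre (w : ℂ) : ℂ →L[ℝ] ℝ :=
  Complex.reCLM.comp ((ContinuousLinearMap.mul ℂ ℂ w).restrictScalars ℝ)

@[simp] lemma mre_apply (w v : ℂ) : mre w v = (w * v).re := rfl

lemma hasA {h : ℂ → ℂ} {c : ℝ} {z : ℂ} (h1 : DifferentiableAt ℂ h z) :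
    HasFDerivAt (fun z => normSq (h z) + c)
      ((2:ℝ) • mre ((starRingEnd ℂ) (h z) * deriv h z)) z := by
  have hh : HasFDerivAt h
      (((1 : ℂ →L[ℂ] ℂ).smulRight (deriv h z)).restrictScalars ℝ) z :=
    (h1.hasDerivAt.hasFDerivAt).restrictScalars ℝ
  have hconj : HasFDerivAt (fun z => (starRingEnd ℂ) (h z))
      ((Complex.conjCLE.toContinuousLinearMap).comp
        (((1 : ℂ →L[ℂ] ℂ).smulRight (deriv h z)).restrictScalars ℝ)) z :=
    (Complex.conjCLE.toContinuousLinearMap.hasFDerivAt).comp z hh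
  have hmul := hh.mul hconj
  have hre := (Complex.reCLM.hasFDerivAt).comp z hmul
  have haff : HasFDerivAt (fun z => ((h z * (starRingEnd ℂ) (h z)).re + c))
      (Complex.reCLM.comp _) z := hre.add_const c
  have : (fun z => normSq (h z) + c)
      = fun z => (h z * (starRingEnd ℂ) (h z)).re + c := by
    funext w; rw [Complex.mul_conj]; simp
  rw [this]
  convert haff using 1
  ext v
  simp only [mre_apply, ContinuousLinearMap.smul_apply, ContinuousLinearMap.coe_comp',
    Function.comp_apply, Pi.smul_apply]
  simp [Complex.mul_re, Complex.mul_im, smul_eq_mul]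
  ring

lemma hasF {h : ℂ → ℂ} {c : ℝ} {z : ℂ}
    (h1 : DifferentiableAt ℂ h z)
    (hA : normSq (h z) + c ≠ 0) :
    HasFDerivAt (fun z => Real.log (normSq (h z) + c))
      ((2 / (normSq (h z) + c)) • mre ((starRingEnd ℂ) (h z) * deriv h z)) z := by
  have := (Real.hasDerivAt_log hA).comp_hasFDerivAt z (hasA (c := c) h1)
  refine this.congr_fderiv ?_
  rw [smul_smul]
  congr 1
  field_simp

lemma hasG {h : ℂ → ℂ} {c : ℝ} {t : ℂ} (hd1 : DifferentiableAt ℂ h t)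
    (hd2 : DifferentiableAt ℂ (deriv h) t) (hA0 : normSq (h t) + c ≠ 0) (v : ℂ) :
    ∃ L : ℂ →L[ℝ] ℝ, HasFDerivAt (fun z => 2 * (normSq (h z) + c)⁻¹ *
        (mre v ((starRingEnd ℂ) (h z) * deriv h z))) L t ∧
      L v = 2 / (normSq (h t) + c) * ((((starRingEnd ℂ) (deriv h t * v)) * deriv h t
            + (starRingEnd ℂ) (h t) * (deriv (deriv h) t * v)) * v).re
        - (2 * (((starRingEnd ℂ) (h t) * deriv h t * v).re))^2
            / (normSq (h t) + c) ^ 2 := by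
  have hht : HasFDerivAt h
      (((1 : ℂ →L[ℂ] ℂ).smulRight (deriv h t)).restrictScalars ℝ) t :=
    (hd1.hasDerivAt.hasFDerivAt).restrictScalars ℝ
  have hconj : HasFDerivAt (fun z => (starRingEnd ℂ) (h z))
      ((Complex.conjCLE.toContinuousLinearMap).comp
        (((1 : ℂ →L[ℂ] ℂ).smulRight (deriv h t)).restrictScalars ℝ)) t :=
    (Complex.conjCLE.toContinuousLinearMap.hasFDerivAt).comp t hht
  have hderiv : HasFDerivAt (deriv h)
      (((1 : ℂ →L[ℂ] ℂ).smulRight (deriv (deriv h) t)).restrictScalars ℝ) t :=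
    (hd2.hasDerivAt.hasFDerivAt).restrictScalars ℝ
  have hw := hconj.mul hderiv
  have hAinv : HasFDerivAt (fun z => (normSq (h z) + c)⁻¹)
      ((-(((normSq (h t) + c) ^ 2)⁻¹)) •
        ((2:ℝ) • mre ((starRingEnd ℂ) (h t) * deriv h t))) t :=
    (hasDerivAt_inv hA0).comp_hasFDerivAt t (hasA hd1)
  have hN : HasFDerivAt (fun z => mre v ((starRingEnd ℂ) (h z) * deriv h z))
      ((mre v).comp _) t := ((mre v).hasFDerivAt).comp t hw
  have hG := (hAinv.const_mul (2:ℝ)).mul hN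
  refine ⟨_, hG, ?_⟩
  simp only [ContinuousLinearMap.add_apply, ContinuousLinearMap.smul_apply,
    ContinuousLinearMap.coe_comp', Function.comp_apply, Pi.smul_apply,
    ContinuousLinearMap.coe_smul', ContinuousLinearMap.smulRight_apply,
    ContinuousLinearMap.one_apply, ContinuousLinearMap.coe_restrictScalars',
    ContinuousLinearEquiv.coe_coe, Complex.conjCLE_apply, mre_apply,
    smul_eq_mul]
  rw [div_eq_mul_inv, div_eq_mul_inv]
  ring_nf

lemma sumval (a b e : ℂ) (c : ℝ) (hA0 : normSq a + c ≠ 0) :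
    (2 / (normSq a + c) * ((((starRingEnd ℂ) (b * 1)) * b
          + (starRingEnd ℂ) a * (e * 1)) * 1).re
      - (2 * (((starRingEnd ℂ) a * b * 1).re))^2 / (normSq a + c) ^ 2)
    + (2 / (normSq a + c) * ((((starRingEnd ℂ) (b * Complex.I)) * b
          + (starRingEnd ℂ) a * (e * Complex.I)) * Complex.I).re
      - (2 * (((starRingEnd ℂ) a * b * Complex.I).re))^2 / (normSq a + c) ^ 2)
    = 4 * c * normSq b / (normSq a + c) ^ 2 := by
  rw [show (4:ℝ) * c * normSq b / (normSq a + c)^2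
      = 4 * ((normSq a + c) - normSq a) * normSq b / (normSq a + c)^2 by ring]
  set A := normSq a + c with hA1
  simp only [Complex.mul_re, Complex.mul_im, Complex.normSq_apply, Complex.conj_re,
    Complex.conj_im, Complex.I_re, Complex.I_im, Complex.one_re, Complex.one_im,
    Complex.add_re, Complex.add_im]
  field_simp
  ring

theorem stmt14 (D : Set ℂ) (hD : IsOpen D) (g : ℂ → ℂ)
    (hg : DifferentiableOn ℂ g D) (hg' : ∀ t ∈ D, deriv g t ≠ 0)
    (ν : ℂ → ℝ)
    (hν : ∀ t, ν t = 4 * ‖deriv g t‖ ^ 2 / (‖g t‖ ^ 2 + 1) ^ 2) :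
    ∀ t ∈ D, 0 < ν t ∧ lap (fun z => Real.log (ν z)) t + 2 * ν t = 0 := by
  intro t ht
  have hgan : AnalyticOnNhd ℂ g D := hg.analyticOnNhd hD
  have hg1 : AnalyticOnNhd ℂ (deriv g) D := hgan.deriv
  have hg2 : AnalyticOnNhd ℂ (deriv (deriv g)) D := hg1.deriv
  have hpos : 0 < ν t := by
    rw [hν t]
    have h1 : 0 < ‖deriv g t‖ := norm_pos_iff.mpr (hg' t ht)
    positivity
  refine ⟨hpos, ?_⟩
  have hA1 : ∀ z ∈ D, normSq (deriv g z) + 0 ≠ 0 := by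
    intro z hz
    simpa using ne_of_gt (normSq_pos.mpr (hg' z hz))
  have hA2 : ∀ z ∈ D, normSq (g z) + 1 ≠ 0 := by
    intro z hz
    have := normSq_nonneg (g z); positivity
  have hνns : ∀ z, ν z = 4 * normSq (deriv g z) / (normSq (g z) + 1) ^ 2 := by
    intro z
    rw [hν z, Complex.sq_norm, Complex.sq_norm]
  have heq : (fun z => Real.log (ν z)) =ᶠ[nhds t]
      fun z => Real.log 4 + (Real.log (normSq (deriv g z) + 0)
        + (-2) * Real.log (normSq (g z) + 1)) := by
    filter_upwards [hD.mem_nhds ht] with z hz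
    rw [hνns z]
    have h1 : normSq (deriv g z) ≠ 0 := by simpa using hA1 z hz
    have h2 : normSq (g z) + 1 ≠ 0 := hA2 z hz
    rw [Real.log_div (by simp [h1]) (pow_ne_zero 2 h2), Real.log_mul (by norm_num) h1,
      Real.log_pow, add_zero]
    push_cast
    ring
  have efd : ∀ v : ℂ, (fun z => fderiv ℝ (fun z => Real.log (ν z)) z v) =ᶠ[nhds t]
      (fun z => (2 * (normSq (deriv g z) + 0)⁻¹ *
          (mre v ((starRingEnd ℂ) (deriv g z) * deriv (deriv g) z)))
        + (-2) * (2 * (normSq (g z) + 1)⁻¹ *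
          (mre v ((starRingEnd ℂ) (g z) * deriv g z)))) := by
    intro v
    filter_upwards [heq.eventually_nhds, hD.mem_nhds ht] with z hz hzD
    have hP := hasF (h := deriv g) (c := 0) ((hg1 z hzD).differentiableAt) (hA1 z hzD)
    have hQ := hasF (h := g) (c := 1) ((hgan z hzD).differentiableAt) (hA2 z hzD)
    have hGz := (hP.add (hQ.const_mul (-2))).const_add (Real.log 4)
    rw [Filter.EventuallyEq.fderiv_eq hz, HasFDerivAt.fderiv (f := fun x => Real.log 4 + (Real.log (normSq (deriv g x) + 0) + -2 * Real.log (normSq (g x) + 1))) hGz]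
    simp only [ContinuousLinearMap.add_apply, ContinuousLinearMap.smul_apply, mre_apply,
      smul_eq_mul]
    rw [div_eq_mul_inv, div_eq_mul_inv]
    ring_nf
  obtain ⟨L1, hL1, vL1⟩ := hasG (h := deriv g) (c := 0) ((hg1 t ht).differentiableAt)
    ((hg2 t ht).differentiableAt) (hA1 t ht) 1
  obtain ⟨M1, hM1, vM1⟩ := hasG (h := g) (c := 1) ((hgan t ht).differentiableAt)
    ((hg1 t ht).differentiableAt) (hA2 t ht) 1
  obtain ⟨LI, hLI, vLI⟩ := hasG (h := deriv g) (c := 0) ((hg1 t ht).differentiableAt)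
    ((hg2 t ht).differentiableAt) (hA1 t ht) Complex.I
  obtain ⟨MI, hMI, vMI⟩ := hasG (h := g) (c := 1) ((hgan t ht).differentiableAt)
    ((hg1 t ht).differentiableAt) (hA2 t ht) Complex.I
  have c1 : fderiv ℝ (fun z => fderiv ℝ (fun z => Real.log (ν z)) z 1) t 1
      = L1 1 + (-2) * (M1 1) := by
    rw [(efd 1).fderiv_eq]; erw [(hL1.add (hM1.const_mul (-2))).fderiv]
    simp
  have cI : fderiv ℝ (fun z => fderiv ℝ (fun z => Real.log (ν z)) z Complex.I) t Complex.I
      = LI Complex.I + (-2) * (MI Complex.I) := by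
    rw [(efd Complex.I).fderiv_eq]; erw [(hLI.add (hMI.const_mul (-2))).fderiv]
    simp
  have s1 := sumval (deriv g t) (deriv (deriv g) t) (deriv (deriv (deriv g)) t) 0 (hA1 t ht)
  have s2 := sumval (g t) (deriv g t) (deriv (deriv g) t) 1 (hA2 t ht)
  rw [lap, c1, cI, vL1, vM1, vLI, vMI, hνns t]
  linear_combination s1 - 2 * s2
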